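/- Let k ∈ {3, 4, 6} and let D be a squarefree positive integer. If a triple (t, r, q) of nonzero polynomials in ℚ[x] parameterizes a complete family of pairing-friendly elliptic curves with embedding degree k and CM discriminant D, then ρ(t, r, q) ≠ 1, i.e., deg q ≠ deg r. -/

import Mathlib

open Polynomial

/-- `f ∈ ℚ[x]` represents integers: there is an integer `a` with `f(a) ∈ ℤ`. -/
def RepresentsIntegers (f : ℚ[X]) : Prop :=
  ∃ a n : ℤ, f.eval (a : ℚ) = (n : ℚ)

/-- `f ∈ ℚ[x]` represents primes: `f` is nonconstant, irreducible over `ℚ`,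
has positive leading coefficient, represents integers, and no prime number
divides every integer value `f(a)` with `a ∈ ℤ`, `f(a) ∈ ℤ`. -/
def RepresentsPrimes (f : ℚ[X]) : Prop :=
  0 < f.natDegree ∧ Irreducible f ∧ 0 < f.leadingCoeff ∧ RepresentsIntegers f ∧
    ∀ p : ℕ, p.Prime → ∃ a n : ℤ, f.eval (a : ℚ) = (n : ℚ) ∧ ¬ (p : ℤ) ∣ n

/-- `(t, r, q)` parameterizes a complete family of pairing-friendly elliptic curves
with embedding degree `k` and CM discriminant `D`:
(i) `r` represents primes; (ii) `q` represents primes; (iii) `r ∣ q + 1 - t`;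
(iv) `r ∣ Φ_k(t - 1)`; (v) `D·y² = 4q - t²` for some `y ∈ ℚ[x]`. -/
def IsCompleteFamily (k D : ℕ) (t r q : ℚ[X]) : Prop :=
  t ≠ 0 ∧ r ≠ 0 ∧ q ≠ 0 ∧
  RepresentsPrimes r ∧ RepresentsPrimes q ∧
  r ∣ (q + 1 - t) ∧
  r ∣ (cyclotomic k ℚ).comp (t - 1) ∧
  ∃ y : ℚ[X], (D : ℚ[X]) * y ^ 2 = 4 * q - t ^ 2

lemma cyclo3' : cyclotomic 3 ℚ = X^2 + C 1 * X + 1 := by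
  have : Fact (Nat.Prime 3) := ⟨by norm_num⟩
  rw [cyclotomic_prime]
  simp [Finset.sum_range_succ]
  ring

lemma cyclo4' : cyclotomic 4 ℚ = X^2 + C 0 * X + 1 := by
  have : cyclotomic (2^(1+1)) ℚ = _ := cyclotomic_prime_pow_eq_geom_sum (R := ℚ) (n := 1) Nat.prime_two
  norm_num at this
  rw [this]
  simp [Finset.sum_range_succ]

lemma cyclo6' : cyclotomic 6 ℚ = X^2 + C (-1) * X + 1 := by
  have h := prod_cyclotomic_eq_X_pow_sub_one (n := 6) (by norm_num) ℚ
  have hd : (6:ℕ).divisors = {1,2,3,6} := by decide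
  rw [hd] at h
  rw [Finset.prod_insert (by decide), Finset.prod_insert (by decide),
    Finset.prod_insert (by decide), Finset.prod_singleton] at h
  rw [cyclotomic_one, cyclotomic_two, cyclo3'] at h
  have hne : ((X - 1) * ((X + 1) * (X^2 + C 1 * X + 1)) : ℚ[X]) ≠ 0 := by
    intro hc
    have := congrArg (eval 2) hc
    norm_num at this
  apply mul_left_cancel₀ hne
  rw [mul_assoc, mul_assoc, h]
  simp only [C_1, map_neg]
  ring

lemma arith_aux' (m : ℤ) (hm : m = 3 ∨ m = 4 ∨ m = 5) (S : ℚ) (n : ℤ)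
    (h : S^2 + (m:ℚ)*S + 1 = 4*n) : False := by
  set u : ℤ := S.num with hu
  set v : ℤ := (S.den : ℤ) with hv
  have hvz : v ≠ 0 := by
    rw [hv]; exact_mod_cast S.den_nz
  have hv0 : (v:ℚ) ≠ 0 := by exact_mod_cast hvz
  have hS : S = (u:ℚ) / (v:ℚ) := by exact_mod_cast (Rat.num_div_den S).symm
  rw [hS] at h
  field_simp at h
  have hZ3 : v * (u^2 + m*u*v + v^2) = v * (4*n*v^2) := by
    have : u^2*v + m*u*v^2 + v^2*v = 4*n*(v^2*v) := by
      have h' : u * (u + v * m) + v ^ 2 = v ^ 2 * 4 * n := by exact_mod_cast h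
      linear_combination v * h'
    ring_nf
    ring_nf at this
    linarith
  have hZ : u^2 + m*u*v + v^2 = 4*n*v^2 := mul_left_cancel₀ hvz hZ3
  have hdvd : v ∣ u^2 := ⟨4*n*v - m*u - v, by linarith [hZ]⟩
  have hcop : Nat.Coprime S.num.natAbs S.den := S.reduced
  have hden1 : S.den = 1 := by
    have h1 : S.den ∣ u.natAbs^2 := by
      have := Int.natAbs_dvd_natAbs.mpr hdvd
      simpa [Int.natAbs_pow, hv] using this
    exact Nat.Coprime.eq_one_of_dvd ((hcop.symm).pow_right 2) h1
  have hveq : v = 1 := by rw [hv, hden1]; norm_num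
  rw [hveq] at hZ
  have h4 : ((u : ZMod 4)^2 + (m:ZMod 4)*(u : ZMod 4) + 1 = 0) := by
    have := congrArg (fun z : ℤ => (z : ZMod 4)) hZ
    push_cast at this
    rw [show ((4:ZMod 4)) = 0 by decide] at this
    simpa using this
  rcases hm with rfl | rfl | rfl
  · have : ∀ x : ZMod 4, ¬ (x^2 + 3*x + 1 = 0) := by decide
    exact this u (by push_cast at h4; simpa using h4)
  · have : ∀ x : ZMod 4, ¬ (x^2 + 4*x + 1 = 0) := by decide
    exact this u (by push_cast at h4; simpa using h4)
  · have : ∀ x : ZMod 4, ¬ (x^2 + 5*x + 1 = 0) := by decide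
    exact this u (by push_cast at h4; simpa using h4)

set_option maxHeartbeats 2000000 in
/-- No ideal complete family with embedding degree 3, 4, or 6. -/
theorem no_ideal_family_deg_3_4_6 (k D : ℕ) (hk : k = 3 ∨ k = 4 ∨ k = 6)
    (hD : Squarefree D) (hDpos : 0 < D) (t r q : ℚ[X])
    (h : IsCompleteFamily k D t r q) :
    q.natDegree ≠ r.natDegree := by
  intro hdeg
  obtain ⟨ht0, hr0, hq0, hrp, hqp, hdvd1, hdvd2, y, hy⟩ := h
  obtain ⟨hrdeg, hrirr, hrlc, hrint, hrpr⟩ := hrp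
  obtain ⟨hqdeg, hqirr, hqlc, hqint, hqpr⟩ := hqp
  obtain ⟨β, hβ, hcyc⟩ : ∃ β : ℚ, (β = 1 ∨ β = 0 ∨ β = -1) ∧
      cyclotomic k ℚ = X^2 + C β * X + 1 := by
    rcases hk with rfl | rfl | rfl
    · exact ⟨1, Or.inl rfl, cyclo3'⟩
    · exact ⟨0, Or.inr (Or.inl rfl), cyclo4'⟩
    · exact ⟨-1, Or.inr (Or.inr rfl), cyclo6'⟩
  set s : ℚ[X] := t - 1 with hs
  set P : ℚ[X] := s^2 + C β * s + 1 with hPdef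
  have hcomp : (cyclotomic k ℚ).comp s = P := by
    rw [hcyc, hPdef]
    simp [add_comp, mul_comp, pow_comp, X_comp, C_comp, one_comp]
  rw [hcomp] at hdvd2
  have hevalpos : ∀ x : ℚ, 0 < P.eval x := by
    intro x
    have hPx : P.eval x = (s.eval x)^2 + β * s.eval x + 1 := by
      simp [hPdef]
    rw [hPx]
    rcases hβ with rfl | rfl | rfl <;>
      nlinarith [sq_nonneg (s.eval x), sq_nonneg (s.eval x + 1), sq_nonneg (s.eval x - 1),
        sq_nonneg (2 * s.eval x + 1), sq_nonneg (2 * s.eval x - 1)]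
  have hP0 : P ≠ 0 := fun hc => by simpa [hc] using (hevalpos 0)
  have hsC : s = t - C 1 := by rw [hs]; simp
  have hsdeg : s.natDegree = t.natDegree := by rw [hsC, natDegree_sub_C]
  have hCs_le : (C β * s).natDegree ≤ s.natDegree := by
    calc (C β * s).natDegree ≤ (C β).natDegree + s.natDegree := natDegree_mul_le
    _ = s.natDegree := by rw [natDegree_C]; omega
  have hPle : P.natDegree ≤ 2 * s.natDegree := by
    calc P.natDegree ≤ max (s^2 + C β * s).natDegree (1:ℚ[X]).natDegree := natDegree_add_le _ _
    _ ≤ max (max (s^2).natDegree (C β * s).natDegree) (1:ℚ[X]).natDegree := by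
        exact max_le_max (natDegree_add_le _ _) le_rfl
    _ ≤ 2 * s.natDegree := by
        rw [natDegree_pow, natDegree_one]
        have := hCs_le
        omega
  have htdeg : 1 ≤ t.natDegree := by
    by_contra hc
    push_neg at hc
    have h0 : t.natDegree = 0 := by omega
    have := natDegree_le_of_dvd hdvd2 hP0
    rw [← hsdeg] at h0
    omega
  have hs0 : s ≠ 0 := by
    intro hc
    rw [hc] at hsdeg
    simp at hsdeg
    omega
  have hPdeg : P.natDegree = 2 * s.natDegree := by
    have hs2 : (s^2 : ℚ[X]) ≠ 0 := pow_ne_zero _ hs0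
    have h1 : (C β * s + 1).natDegree ≤ s.natDegree := by
      calc (C β * s + 1).natDegree ≤ max (C β * s).natDegree (1:ℚ[X]).natDegree :=
          natDegree_add_le _ _
      _ ≤ s.natDegree := by rw [natDegree_one]; omega
    have hlt : degree (C β * s + 1) < degree (s^2) := by
      calc degree (C β * s + 1) ≤ ((C β * s + 1).natDegree : WithBot ℕ) := degree_le_natDegree
      _ ≤ (s.natDegree : WithBot ℕ) := by exact_mod_cast h1
      _ < (((s^2).natDegree : ℕ) : WithBot ℕ) := by
          rw [natDegree_pow]
          exact_mod_cast (by omega : s.natDegree < 2 * s.natDegree)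
      _ = degree (s^2) := (degree_eq_natDegree hs2).symm
    have hPP : P = s^2 + (C β * s + 1) := by rw [hPdef]; ring
    have := degree_add_eq_left_of_degree_lt hlt
    rw [hPP, natDegree_eq_of_degree_eq this, natDegree_pow]
  have hrle : r.natDegree ≤ 2 * t.natDegree := by
    have := natDegree_le_of_dvd hdvd2 hP0
    omega
  -- rewrite the nat cast D as C
  rw [show ((D:ℚ[X])) = C ((D:ℚ)) from (C_eq_natCast D).symm] at hy
  have hDQ : (0:ℚ) < (D:ℚ) := by exact_mod_cast hDpos
  -- y ≠ 0
  have hy0 : y ≠ 0 := by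
    rintro rfl
    simp only [ne_eq, OfNat.ofNat_ne_zero, not_false_eq_true, zero_pow, mul_zero] at hy
    have hone : (4:ℚ[X]) * C (2⁻¹:ℚ) * C (2⁻¹:ℚ) = 1 := by
      rw [show (4:ℚ[X]) = C (4:ℚ) from (map_ofNat C 4).symm, ← C_mul, ← C_mul]
      norm_num
    have hqf : q = (C (2⁻¹:ℚ) * t) * (C (2⁻¹:ℚ) * t) := by
      apply mul_left_cancel₀ (show (4:ℚ[X]) ≠ 0 by norm_num)
      linear_combination -hy - t^2 * hone
    rcases hqirr.isUnit_or_isUnit hqf with hu | hu <;>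
    · have h1 := natDegree_eq_zero_of_isUnit hu
      rw [natDegree_C_mul (by norm_num : (2⁻¹:ℚ) ≠ 0)] at h1
      omega
  have hlcy : y.leadingCoeff ≠ 0 := leadingCoeff_ne_zero.mpr hy0
  have hlct : t.leadingCoeff ≠ 0 := leadingCoeff_ne_zero.mpr ht0
  -- q + 1 - t ≠ 0
  have hqt0 : q + 1 - t ≠ 0 := by
    intro hqt
    have hq1 : q - 1 ≠ 0 := by
      intro hc
      have hq1' : q = C 1 := by rw [show (C 1:ℚ[X]) = 1 by simp]; linear_combination hc
      rw [hq1', natDegree_C] at hqdeg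
      omega
    have hkey : C (D:ℚ) * y^2 = -((q - 1)^2) := by linear_combination hy + (q + 1 + t) * hqt
    have hlcl := congrArg leadingCoeff hkey
    rw [leadingCoeff_mul, leadingCoeff_C, leadingCoeff_pow, leadingCoeff_neg,
      leadingCoeff_pow] at hlcl
    have h1 : (q-1).leadingCoeff ≠ 0 := leadingCoeff_ne_zero.mpr hq1
    have hy2 : 0 < y.leadingCoeff^2 :=
      lt_of_le_of_ne (sq_nonneg _) (Ne.symm (pow_ne_zero 2 hlcy))
    nlinarith [mul_pos hDQ hy2, sq_nonneg ((q-1).leadingCoeff)]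
  -- deg q = 2 deg t
  have hq2t : q.natDegree = 2 * t.natDegree := by
    have hle : q.natDegree ≤ 2 * t.natDegree := by omega
    by_contra hne
    have hlt : q.natDegree < 2 * t.natDegree := by omega
    have ht2 : (t^2:ℚ[X]) ≠ 0 := pow_ne_zero _ ht0
    have h1 : (4*q:ℚ[X]).natDegree ≤ q.natDegree := by
      have := natDegree_mul_le (p := (4:ℚ[X])) (q := q)
      simpa using this
    have hdlt : degree (4*q : ℚ[X]) < degree (t^2) := by
      calc degree (4*q:ℚ[X]) ≤ ((4*q:ℚ[X]).natDegree : WithBot ℕ) := degree_le_natDegree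
      _ ≤ (q.natDegree : WithBot ℕ) := by exact_mod_cast h1
      _ < (((t^2).natDegree : ℕ) : WithBot ℕ) := by
          rw [natDegree_pow]; exact_mod_cast hlt
      _ = degree (t^2) := (degree_eq_natDegree ht2).symm
    have hrw : (4*q - t^2 : ℚ[X]) = 4*q + (-(t^2)) := by ring
    have hlc : (4*q - t^2:ℚ[X]).leadingCoeff = -(t.leadingCoeff^2) := by
      rw [hrw, leadingCoeff_add_of_degree_lt (by rwa [degree_neg]), leadingCoeff_neg,
        leadingCoeff_pow]
    have hcc := congrArg leadingCoeff hy
    rw [leadingCoeff_mul, leadingCoeff_C, leadingCoeff_pow, hlc] at hcc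
    have hy2 : 0 < y.leadingCoeff^2 :=
      lt_of_le_of_ne (sq_nonneg _) (Ne.symm (pow_ne_zero 2 hlcy))
    have ht2' : 0 < t.leadingCoeff^2 :=
      lt_of_le_of_ne (sq_nonneg _) (Ne.symm (pow_ne_zero 2 hlct))
    nlinarith [mul_pos hDQ hy2]
  -- P = r * C c
  obtain ⟨g, hg⟩ := hdvd2
  have hg0 : g ≠ 0 := by
    rintro rfl
    rw [mul_zero] at hg
    exact hP0 hg
  have hgdeg : g.natDegree = 0 := by
    have := natDegree_mul hr0 hg0
    rw [← hg] at this
    omega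
  obtain ⟨c, hc⟩ := natDegree_eq_zero.mp hgdeg
  have hc0 : c ≠ 0 := by
    rintro rfl
    rw [map_zero] at hc
    exact hg0 hc.symm
  -- q + 1 - t = r * C a
  obtain ⟨g2, hg2⟩ := hdvd1
  have hg20 : g2 ≠ 0 := by
    rintro rfl
    rw [mul_zero] at hg2
    exact hqt0 hg2
  have hg2deg : g2.natDegree = 0 := by
    have hmul := natDegree_mul hr0 hg20
    rw [← hg2] at hmul
    have hle2 : (q+1-t).natDegree ≤ q.natDegree := by
      have h1 : (q + (1 - t)).natDegree ≤ max q.natDegree (1 - t:ℚ[X]).natDegree :=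
        natDegree_add_le _ _
      have h2 : (1 - t : ℚ[X]).natDegree = t.natDegree := by
        rw [show (1 - t:ℚ[X]) = -(t - C 1) by simp, natDegree_neg, natDegree_sub_C]
      rw [show (q+1-t:ℚ[X]) = q + (1-t) by ring]
      omega
    have hge2 : r.natDegree ≤ (q+1-t).natDegree := natDegree_le_of_dvd ⟨g2, hg2⟩ hqt0
    omega
  obtain ⟨a, ha⟩ := natDegree_eq_zero.mp hg2deg
  have ha0 : a ≠ 0 := by
    rintro rfl
    rw [map_zero] at ha
    exact hg20 ha.symm
  -- q = C e₀ * P + s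
  obtain ⟨e₀, he₀def⟩ : ∃ e₀ : ℚ, e₀ = a * c⁻¹ := ⟨_, rfl⟩
  have he₀0 : e₀ ≠ 0 := by
    rw [he₀def]
    exact mul_ne_zero ha0 (inv_ne_zero hc0)
  have hPr : P * C e₀ = r * C a := by
    rw [hg, ← hc, mul_assoc, ← C_mul]
    congr 2
    rw [he₀def]
    field_simp
  have hqPt : q + 1 - t = P * C e₀ := by rw [hg2, ← ha, ← hPr]
  have hqP : q = C e₀ * (s^2 + C β * s + 1) + s := by
    rw [← hPdef]
    linear_combination hqPt - hs
  obtain ⟨A, hAdef⟩ : ∃ A : ℚ, A = 4*e₀ - 1 := ⟨_, rfl⟩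
  obtain ⟨B, hBdef⟩ : ∃ B : ℚ, B = 4*e₀*β + 2 := ⟨_, rfl⟩
  have hCA : (C A : ℚ[X]) = 4 * C e₀ - 1 := by
    rw [hAdef, C_sub, C_mul, map_ofNat, C_1]
  have hCB : (C B : ℚ[X]) = 4 * C e₀ * C β + 2 := by
    rw [hBdef, C_add, C_mul, C_mul, map_ofNat, map_ofNat]
  have key : C (D:ℚ) * y^2 = C A * s^2 + C B * s + C A := by
    rw [hCA, hCB]
    linear_combination hy + 4*hqP + (s+1+t)*hs
  rcases eq_or_ne A 0 with hA0 | hA0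
  · -- the case q = (Φ(s) + 4s)/4 : no integer values
    have he : e₀ = 4⁻¹ := by rw [hAdef] at hA0; linarith
    obtain ⟨a₀, n, hn⟩ := hqint
    have hev := congrArg (eval (a₀:ℚ)) hqP
    simp only [eval_add, eval_mul, eval_pow, eval_C, eval_one] at hev
    rw [hn, he] at hev
    rcases hβ with rfl | rfl | rfl
    · exact arith_aux' 5 (by norm_num) (s.eval (a₀:ℚ)) n (by push_cast; push_cast at hev; linarith)
    · exact arith_aux' 4 (by norm_num) (s.eval (a₀:ℚ)) n (by push_cast; push_cast at hev; linarith)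
    · exact arith_aux' 3 (by norm_num) (s.eval (a₀:ℚ)) n (by push_cast; push_cast at hev; linarith)
  · obtain ⟨w, hwdef⟩ : ∃ w : ℚ[X], w = 2 * C A * s + C B := ⟨_, rfl⟩
    have h2A : (2*A : ℚ) ≠ 0 := by simp [hA0]
    have hwdeg : w.natDegree = t.natDegree := by
      rw [hwdef, show (2:ℚ[X]) * C A = C (2*A) by rw [C_mul, map_ofNat], natDegree_add_C,
        natDegree_C_mul h2A, hsdeg]
    have hw0 : w ≠ 0 := by
      intro hc
      rw [hc, natDegree_zero] at hwdeg
      omega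
    obtain ⟨E, hEdef⟩ : ∃ E : ℚ, E = 4*A*(D:ℚ) := ⟨_, rfl⟩
    obtain ⟨Δ, hΔdef⟩ : ∃ Δ : ℚ, Δ = B^2 - 4*A^2 := ⟨_, rfl⟩
    have hCE : (C E:ℚ[X]) = 4 * C A * C (D:ℚ) := by
      rw [hEdef, C_mul, C_mul, map_ofNat]
    have hCΔ : (C Δ:ℚ[X]) = C B^2 - 4 * C A^2 := by
      rw [hΔdef, C_sub, C_mul, C_pow, C_pow, map_ofNat]
    have hww : w^2 = C E * y^2 + C Δ := by
      rw [hCE, hCΔ]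
      linear_combination (-(4*C A))*key + (w + 2*C A*s + C B)*hwdef
    rcases eq_or_ne Δ 0 with hΔ0 | hΔ0
    · have hBB : (B - 2*A)*(B + 2*A) = 0 := by
        rw [hΔdef] at hΔ0
        nlinarith [hΔ0]
      rcases mul_eq_zero.mp hBB with h1 | h1
      · have hrel : e₀*β + 1 = 2*e₀ := by
          rw [hAdef, hBdef] at h1
          linarith
        have hCrel : C e₀ * C β + 1 = 2 * C e₀ := by
          have hCr := congrArg (fun x : ℚ => (C x : ℚ[X])) hrel
          simpa only [C_add, C_mul, C_1, map_ofNat] using hCr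
        have hqt2 : q = (C e₀ * t) * t := by
          linear_combination hqP + s*hCrel + C e₀*(s+1+t)*hs
        rcases hqirr.isUnit_or_isUnit hqt2 with hu | hu
        · have h2 := natDegree_eq_zero_of_isUnit hu
          rw [natDegree_C_mul he₀0] at h2
          omega
        · have h2 := natDegree_eq_zero_of_isUnit hu
          omega
      · rw [hAdef, hBdef] at h1
        rcases hβ with rfl | rfl | rfl <;> (apply he₀0; linarith)
    · have hCEy : C E * y^2 = w^2 - C Δ := by linear_combination -hww
      have hwdeg2 : (w^2).natDegree = 2 * t.natDegree := by rw [natDegree_pow, hwdeg]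
      have hndne : (w^2).natDegree ≠ 0 := by omega
      have hlceq : leadingCoeff (C E * y^2) = leadingCoeff (w^2) := by
        rw [hCEy, leadingCoeff, leadingCoeff, natDegree_sub_C, coeff_sub, coeff_C,
          if_neg hndne, sub_zero]
      rw [leadingCoeff_mul, leadingCoeff_C, leadingCoeff_pow, leadingCoeff_pow] at hlceq
      obtain ⟨e, hedef⟩ : ∃ e : ℚ, e = w.leadingCoeff / y.leadingCoeff := ⟨_, rfl⟩
      have he2 : e^2 = E := by
        rw [hedef, div_pow, ← hlceq, mul_div_assoc, div_self (pow_ne_zero 2 hlcy), mul_one]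
      have hCe2 : (C e:ℚ[X])^2 = C E := by rw [← C_pow, he2]
      have hfac : (w - C e * y) * (w + C e * y) = C Δ := by
        linear_combination hww - y^2 * hCe2
      have hΔC0 : (C Δ:ℚ[X]) ≠ 0 := by
        intro hc
        apply hΔ0
        have := congrArg (eval 0) hc
        simpa using this
      have hf1 : w - C e * y ≠ 0 := by
        intro hc
        rw [hc, zero_mul] at hfac
        exact hΔC0 hfac.symm
      have hf2 : w + C e * y ≠ 0 := by
        intro hc
        rw [hc, mul_zero] at hfac
        exact hΔC0 hfac.symm
      have hsum := natDegree_mul hf1 hf2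
      rw [hfac, natDegree_C] at hsum
      obtain ⟨u1, hu1⟩ := natDegree_eq_zero.mp (by omega : (w - C e*y).natDegree = 0)
      obtain ⟨u2, hu2⟩ := natDegree_eq_zero.mp (by omega : (w + C e*y).natDegree = 0)
      have h2w : C (u1+u2) = C 2 * w := by
        rw [C_add, hu1, hu2, show (C (2:ℚ)) = (2:ℚ[X]) from map_ofNat C 2]
        ring
      have hnd0 : (C 2 * w).natDegree = 0 := by rw [← h2w, natDegree_C]
      rw [natDegree_C_mul (two_ne_zero), hwdeg] at hnd0
      omega
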